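/- Let S be a nonempty finite type, P a row-stochastic matrix in Matrix S S ℝ, r : S → ℝ, and suppose g ∈ ℝ and h : S → ℝ satisfy the Poisson equation g + h s = r s + (P.mulVec h) s for every s. Let γ ∈ [0,1) and let V : S → ℝ satisfy the discounted evaluation equation V = r + γ • P.mulVec V. Then Sp(V) ≤ 4 * Sp(h). -/

import Mathlib

open Finset

noncomputable def supNorm {X : Type*} [Fintype X] [Nonempty X] (v : X → ℝ) : ℝ :=
  Finset.univ.sup' Finset.univ_nonempty fun x => |v x|

noncomputable def spanSN {X : Type*} [Fintype X] [Nonempty X] (v : X → ℝ) : ℝ :=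
  (Finset.univ.sup' Finset.univ_nonempty v) - (Finset.univ.inf' Finset.univ_nonempty v)

def RowStochastic {S : Type*} [Fintype S] (P : Matrix S S ℝ) : Prop :=
  (∀ s s', 0 ≤ P s s') ∧ ∀ s, ∑ s', P s s' = 1

section Aux

variable {X : Type*} [Fintype X] [Nonempty X]

lemma spanSN_nonneg (v : X → ℝ) : 0 ≤ spanSN v := by
  have h1 : Finset.univ.inf' Finset.univ_nonempty v ≤ v (Classical.arbitrary X) :=
    Finset.inf'_le _ (Finset.mem_univ _)
  have h2 : v (Classical.arbitrary X) ≤ Finset.univ.sup' Finset.univ_nonempty v :=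
    Finset.le_sup' _ (Finset.mem_univ _)
  unfold spanSN; linarith

lemma spanSN_add_le (v w : X → ℝ) :
    spanSN (fun s => v s + w s) ≤ spanSN v + spanSN w := by
  have h1 : Finset.univ.sup' Finset.univ_nonempty (fun s => v s + w s)
      ≤ Finset.univ.sup' Finset.univ_nonempty v + Finset.univ.sup' Finset.univ_nonempty w :=
    Finset.sup'_le _ _ fun s _ =>
      add_le_add (Finset.le_sup' _ (Finset.mem_univ s)) (Finset.le_sup' _ (Finset.mem_univ s))
  have h2 : Finset.univ.inf' Finset.univ_nonempty v + Finset.univ.inf' Finset.univ_nonempty w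
      ≤ Finset.univ.inf' Finset.univ_nonempty (fun s => v s + w s) :=
    Finset.le_inf' _ _ fun s _ =>
      add_le_add (Finset.inf'_le _ (Finset.mem_univ s)) (Finset.inf'_le _ (Finset.mem_univ s))
  unfold spanSN; linarith

lemma spanSN_smul_le (c : ℝ) (hc : 0 ≤ c) (v : X → ℝ) :
    spanSN (fun s => c * v s) ≤ c * spanSN v := by
  have h1 : Finset.univ.sup' Finset.univ_nonempty (fun s => c * v s)
      ≤ c * Finset.univ.sup' Finset.univ_nonempty v :=
    Finset.sup'_le _ _ fun s _ =>
      mul_le_mul_of_nonneg_left (Finset.le_sup' _ (Finset.mem_univ s)) hc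
  have h2 : c * Finset.univ.inf' Finset.univ_nonempty v
      ≤ Finset.univ.inf' Finset.univ_nonempty (fun s => c * v s) :=
    Finset.le_inf' _ _ fun s _ =>
      mul_le_mul_of_nonneg_left (Finset.inf'_le _ (Finset.mem_univ s)) hc
  unfold spanSN
  calc _ ≤ c * Finset.univ.sup' Finset.univ_nonempty v
        - c * Finset.univ.inf' Finset.univ_nonempty v := by linarith
    _ = _ := (mul_sub _ _ _).symm

lemma spanSN_neg_le (v : X → ℝ) : spanSN (fun s => -v s) ≤ spanSN v := by
  have h1 : Finset.univ.sup' Finset.univ_nonempty (fun s => -v s)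
      ≤ -Finset.univ.inf' Finset.univ_nonempty v :=
    Finset.sup'_le _ _ fun s _ => neg_le_neg (Finset.inf'_le _ (Finset.mem_univ s))
  have h2 : -Finset.univ.sup' Finset.univ_nonempty v
      ≤ Finset.univ.inf' Finset.univ_nonempty (fun s => -v s) :=
    Finset.le_inf' _ _ fun s _ => neg_le_neg (Finset.le_sup' _ (Finset.mem_univ s))
  unfold spanSN; linarith

lemma spanSN_const (c : ℝ) : spanSN (fun _ : X => c) = 0 := by
  simp [spanSN]

lemma spanSN_mulVec_le {S : Type*} [Fintype S] [Nonempty S]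
    (P : Matrix S S ℝ) (hP : RowStochastic P) (v : S → ℝ) :
    spanSN (P.mulVec v) ≤ spanSN v := by
  have key : ∀ s, Finset.univ.inf' Finset.univ_nonempty v ≤ P.mulVec v s ∧
      P.mulVec v s ≤ Finset.univ.sup' Finset.univ_nonempty v := by
    intro s
    constructor
    · calc Finset.univ.inf' Finset.univ_nonempty v
          = ∑ s', P s s' * Finset.univ.inf' Finset.univ_nonempty v := by
            rw [← Finset.sum_mul, hP.2 s, one_mul]
        _ ≤ ∑ s', P s s' * v s' :=
            Finset.sum_le_sum fun s' _ =>
              mul_le_mul_of_nonneg_left (Finset.inf'_le _ (Finset.mem_univ s')) (hP.1 s s')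
        _ = P.mulVec v s := rfl
    · calc P.mulVec v s = ∑ s', P s s' * v s' := rfl
        _ ≤ ∑ s', P s s' * Finset.univ.sup' Finset.univ_nonempty v :=
            Finset.sum_le_sum fun s' _ =>
              mul_le_mul_of_nonneg_left (Finset.le_sup' _ (Finset.mem_univ s')) (hP.1 s s')
        _ = Finset.univ.sup' Finset.univ_nonempty v := by
            rw [← Finset.sum_mul, hP.2 s, one_mul]
  have h1 : Finset.univ.sup' Finset.univ_nonempty (P.mulVec v)
      ≤ Finset.univ.sup' Finset.univ_nonempty v :=
    Finset.sup'_le _ _ fun s _ => (key s).2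
  have h2 : Finset.univ.inf' Finset.univ_nonempty v
      ≤ Finset.univ.inf' Finset.univ_nonempty (P.mulVec v) :=
    Finset.le_inf' _ _ fun s _ => (key s).1
  unfold spanSN; linarith

end Aux

/-- Per-kernel conclusion of the paper's Lemma 6: the span of the discounted value
function is bounded by four times the bias span. -/
theorem stmt11 {S : Type*} [Fintype S] [Nonempty S]
    (P : Matrix S S ℝ) (hP : RowStochastic P)
    (r : S → ℝ) (g : ℝ) (h : S → ℝ)
    (hPoisson : ∀ s, g + h s = r s + P.mulVec h s)
    (γ : ℝ) (hγ0 : 0 ≤ γ) (hγ1 : γ < 1)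
    (V : S → ℝ) (hV : V = r + γ • P.mulVec V) :
    spanSN V ≤ 4 * spanSN h := by
  have hγ1' : (0:ℝ) < 1 - γ := by linarith
  set c : ℝ := g / (1 - γ) with hc_def
  have hc : (1 - γ) * c = g := by
    rw [hc_def]
    field_simp [hγ1'.ne']
  set u : S → ℝ := fun s => V s - h s - c with hu_def
  have hV' : ∀ s, V s = r s + γ * P.mulVec V s := by
    intro s
    have := congrFun hV s
    simpa using this
  have hmu : ∀ s, P.mulVec u s = P.mulVec V s - P.mulVec h s - c := by
    intro s
    have hsum : ∑ s', P s s' * c = c := by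
      rw [← Finset.sum_mul, hP.2 s, one_mul]
    simp only [hu_def, Matrix.mulVec, dotProduct, mul_sub, Finset.sum_sub_distrib, hsum]
  have hueq : ∀ s, u s = γ * P.mulVec u s + (1 - γ) * (-(P.mulVec h s)) := by
    intro s
    rw [hmu s]
    simp only [hu_def]
    linear_combination hV' s - hPoisson s - hc
  -- span of u bounded by span of h
  have hspan_u : spanSN u ≤ spanSN h := by
    have e1 : spanSN u = spanSN (fun s => γ * P.mulVec u s + (1 - γ) * (-(P.mulVec h s))) := by
      congr 1
      funext s
      exact hueq s
    have e2 := spanSN_add_le (fun s => γ * P.mulVec u s)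
      (fun s => (1 - γ) * (-(P.mulVec h s)))
    have e3 := spanSN_smul_le γ hγ0 (fun s => P.mulVec u s)
    have e4 := spanSN_smul_le (1 - γ) (le_of_lt hγ1') (fun s => -(P.mulVec h s))
    have e5 : spanSN (fun s => P.mulVec u s) ≤ spanSN u := spanSN_mulVec_le P hP u
    have e6 : spanSN (fun s => -(P.mulVec h s)) ≤ spanSN h := by
      calc spanSN (fun s => -(P.mulVec h s)) ≤ spanSN (P.mulVec h) :=
            spanSN_neg_le (P.mulVec h)
        _ ≤ spanSN h := spanSN_mulVec_le P hP h
    nlinarith [spanSN_nonneg u, spanSN_nonneg h]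
  -- conclude
  have hVdecomp : spanSN V ≤ spanSN u + spanSN h := by
    have e1 : spanSN V = spanSN (fun s => u s + (h s + c)) := by
      congr 1
      funext s
      simp [hu_def]
    have e2 := spanSN_add_le u (fun s => h s + c)
    have e3 := spanSN_add_le h (fun _ : S => c)
    have e4 : spanSN (fun _ : S => c) = 0 := spanSN_const c
    calc spanSN V = _ := e1
      _ ≤ spanSN u + spanSN (fun s => h s + c) := e2
      _ ≤ spanSN u + (spanSN h + spanSN (fun _ : S => c)) := by linarith
      _ = spanSN u + spanSN h := by rw [e4]; ring
  have := spanSN_nonneg h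
  linarith
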